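/- Consider a semiexplicit descriptor system: E = [[Σ, 0],[0, 0]] and A = [[A11, A12],[A21, A22]] in block form with Σ ∈ ℂ^{r×r} Hermitian positive definite and A22 ∈ ℂ^{(n−r)×(n−r)} invertible, B = [B1; B2] ∈ ℂ^{n×m}, C = [C1, C2] ∈ ℂ^{m×n}, D ∈ ℂ^{m×m}, and let 𝒜 = Σ^{-1/2}(A11 − A12 A22^{-1} A21)Σ^{-1/2}, ℬ = Σ^{-1/2}(B1 − A12 A22^{-1} B2), 𝒞 = (C1 − C2 A22^{-1} A21)Σ^{-1/2}, 𝒟 = D − C2 A22^{-1} B2 be the reduced standard state-space coefficients. Then for every z ∈ ℂ such that zE − A is invertible, the matrix z I_r − 𝒜 is invertible and C (zE − A)^{-1} B + D = 𝒞 (z I_r − 𝒜)^{-1} ℬ + 𝒟, i.e., the transfer functions of the descriptor system and of the reduced standard state-space system coincide. -/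

import Mathlib

open Matrix
open scoped ComplexOrder

/-- The positive semidefinite square root, as defined in the older Mathlib
(`Matrix.PosSemidef.sqrt`, removed since). -/
noncomputable def Matrix.PosSemidef.sqrt {n : Type*} [Fintype n] [DecidableEq n] {𝕜 : Type*}
    [RCLike 𝕜] {A : Matrix n n 𝕜} (hA : A.PosSemidef) : Matrix n n 𝕜 :=
  hA.1.eigenvectorUnitary.1 * diagonal ((↑) ∘ (√·) ∘ hA.1.eigenvalues) *
  (star hA.1.eigenvectorUnitary : Matrix n n 𝕜)

/-- For a completely causal semiexplicit descriptor system, the transfer function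
coincides with that of the reduced standard state-space system obtained by
eliminating the algebraic variables. -/
theorem semiexplicit_transfer_function_eq
    (r s m : ℕ)
    (Sg : Matrix (Fin r) (Fin r) ℂ) (hSg : Sg.PosDef)
    (A11 : Matrix (Fin r) (Fin r) ℂ) (A12 : Matrix (Fin r) (Fin s) ℂ)
    (A21 : Matrix (Fin s) (Fin r) ℂ) (A22 : Matrix (Fin s) (Fin s) ℂ)
    (hA22 : IsUnit A22)
    (B1 : Matrix (Fin r) (Fin m) ℂ) (B2 : Matrix (Fin s) (Fin m) ℂ)
    (C1 : Matrix (Fin m) (Fin r) ℂ) (C2 : Matrix (Fin m) (Fin s) ℂ)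
    (D : Matrix (Fin m) (Fin m) ℂ)
    (E : Matrix (Fin r ⊕ Fin s) (Fin r ⊕ Fin s) ℂ)
    (hE : E = Matrix.fromBlocks Sg 0 0 0)
    (A : Matrix (Fin r ⊕ Fin s) (Fin r ⊕ Fin s) ℂ)
    (hA : A = Matrix.fromBlocks A11 A12 A21 A22)
    (B : Matrix (Fin r ⊕ Fin s) (Fin m) ℂ) (hB : B = Matrix.fromRows B1 B2)
    (C : Matrix (Fin m) (Fin r ⊕ Fin s) ℂ) (hC : C = Matrix.fromCols C1 C2)
    (S : Matrix (Fin r) (Fin r) ℂ) (hS : S = Matrix.PosSemidef.sqrt hSg.posSemidef)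
    (𝒜 : Matrix (Fin r) (Fin r) ℂ) (h𝒜 : 𝒜 = S⁻¹ * (A11 - A12 * A22⁻¹ * A21) * S⁻¹)
    (ℬ : Matrix (Fin r) (Fin m) ℂ) (hℬ : ℬ = S⁻¹ * (B1 - A12 * A22⁻¹ * B2))
    (𝒞 : Matrix (Fin m) (Fin r) ℂ) (h𝒞 : 𝒞 = (C1 - C2 * A22⁻¹ * A21) * S⁻¹)
    (𝒟 : Matrix (Fin m) (Fin m) ℂ) (h𝒟 : 𝒟 = D - C2 * A22⁻¹ * B2) :
    ∀ z : ℂ, IsUnit (z • E - A) →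
      IsUnit (z • (1 : Matrix (Fin r) (Fin r) ℂ) - 𝒜) ∧
      C * (z • E - A)⁻¹ * B + D
        = 𝒞 * (z • (1 : Matrix (Fin r) (Fin r) ℂ) - 𝒜)⁻¹ * ℬ + 𝒟 := by
  intro z hz
  -- basic facts about S
  have hSS : S * S = Sg := by
    rw [hS, Matrix.PosSemidef.sqrt]
    conv_rhs => rw [hSg.posSemidef.1.spectral_theorem, Unitary.conjStarAlgAut_apply]
    have hU : (star hSg.posSemidef.1.eigenvectorUnitary : Matrix (Fin r) (Fin r) ℂ) *
        (hSg.posSemidef.1.eigenvectorUnitary : Matrix (Fin r) (Fin r) ℂ) = 1 := by simp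
    simp only [Matrix.mul_assoc]
    rw [← Matrix.mul_assoc _ (hSg.posSemidef.1.eigenvectorUnitary : Matrix (Fin r) (Fin r) ℂ), hU,
      Matrix.one_mul, ← Matrix.mul_assoc (diagonal _) (diagonal _), diagonal_mul_diagonal]
    congr 3
    funext i
    simp [← Complex.ofReal_mul, Real.mul_self_sqrt (hSg.posSemidef.eigenvalues_nonneg i)]
  have hSu : IsUnit S := by
    have h := hSg.isUnit
    rw [← hSS, isUnit_iff_isUnit_det, det_mul] at h
    exact (isUnit_iff_isUnit_det S).mpr (IsUnit.mul_iff.mp h).1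
  have hS1 : S * S⁻¹ = 1 := mul_nonsing_inv S ((isUnit_iff_isUnit_det S).mp hSu)
  have hS2 : S⁻¹ * S = 1 := nonsing_inv_mul S ((isUnit_iff_isUnit_det S).mp hSu)
  haveI iA22 : Invertible A22 := hA22.nonempty_invertible.some
  haveI iA22n : Invertible (-A22) := invertibleNeg A22
  -- the block form of z • E - A
  have hM : z • E - A =
      fromBlocks (z • Sg - A11) (-A12) (-A21) (-A22) := by
    rw [hE, hA]
    ext (i | i) (j | j) <;>
      simp [Matrix.sub_apply, Matrix.smul_apply]
  rw [hM] at hz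
  -- identify the Schur complement
  set X : Matrix (Fin r) (Fin r) ℂ := A11 - A12 * A22⁻¹ * A21 with hX
  set W : Matrix (Fin r) (Fin r) ℂ := z • Sg - X with hW
  have hA22inv : (⅟(-A22) : Matrix (Fin s) (Fin s) ℂ) = -(A22⁻¹) := by
    rw [invOf_neg, invOf_eq_nonsing_inv]
  have hSchur : (z • Sg - A11) - (-A12) * ⅟(-A22) * (-A21) = W := by
    rw [hA22inv, hW, hX]
    simp only [Matrix.neg_mul, Matrix.mul_neg, neg_neg]
    abel
  have hWu : IsUnit W := by
    rw [isUnit_fromBlocks_iff_of_invertible₂₂, hSchur] at hz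
    exact hz
  -- relate W to z • 1 - 𝒜
  have hSWS : S * (z • (1 : Matrix (Fin r) (Fin r) ℂ) - 𝒜) * S = W := by
    rw [h𝒜, hW, hX, Matrix.mul_sub, Matrix.sub_mul]
    congr 1
    · rw [Matrix.mul_smul, Matrix.mul_one, Matrix.smul_mul, hSS]
    · calc S * (S⁻¹ * (A11 - A12 * A22⁻¹ * A21) * S⁻¹) * S
          = (S * S⁻¹) * (A11 - A12 * A22⁻¹ * A21) * (S⁻¹ * S) := by
            simp only [Matrix.mul_assoc]
        _ = A11 - A12 * A22⁻¹ * A21 := by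
            rw [hS1, hS2, Matrix.one_mul, Matrix.mul_one]
  have hZu : IsUnit (z • (1 : Matrix (Fin r) (Fin r) ℂ) - 𝒜) := by
    have h := hWu
    rw [← hSWS, isUnit_iff_isUnit_det, det_mul, det_mul] at h
    exact (isUnit_iff_isUnit_det _).mpr (IsUnit.mul_iff.mp (IsUnit.mul_iff.mp h).1).2
  refine ⟨hZu, ?_⟩
  -- inverse of W in terms of the reduced system
  have hZ1 : (z • (1 : Matrix (Fin r) (Fin r) ℂ) - 𝒜) *
      (z • (1 : Matrix (Fin r) (Fin r) ℂ) - 𝒜)⁻¹ = 1 :=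
    mul_nonsing_inv _ ((isUnit_iff_isUnit_det _).mp hZu)
  have hWinv : W⁻¹ = S⁻¹ * (z • (1 : Matrix (Fin r) (Fin r) ℂ) - 𝒜)⁻¹ * S⁻¹ := by
    rw [← hSWS, Matrix.mul_inv_rev, Matrix.mul_inv_rev, Matrix.mul_assoc]
  -- compute the block inverse
  haveI iM : Invertible (fromBlocks (z • Sg - A11) (-A12) (-A21) (-A22)) :=
    hz.nonempty_invertible.some
  haveI iSch : Invertible ((z • Sg - A11) - (-A12) * ⅟(-A22) * (-A21)) := by
    rw [hSchur]; exact hWu.nonempty_invertible.some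
  have hSchInv : (⅟((z • Sg - A11) - (-A12) * ⅟(-A22) * (-A21)) :
      Matrix (Fin r) (Fin r) ℂ) = W⁻¹ := by
    rw [invOf_eq_nonsing_inv, hSchur]
  have hinv : (fromBlocks (z • Sg - A11) (-A12) (-A21) (-A22))⁻¹ =
      fromBlocks (W⁻¹) (-(W⁻¹ * A12 * A22⁻¹)) (-(A22⁻¹ * A21 * W⁻¹))
        (-(A22⁻¹) + A22⁻¹ * A21 * W⁻¹ * A12 * A22⁻¹) := by
    rw [← invOf_eq_nonsing_inv, invOf_fromBlocks₂₂_eq, hSchInv, hA22inv]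
    simp only [Matrix.neg_mul, Matrix.mul_neg, neg_neg]
  -- main computation
  rw [hM, hinv, hB, hC, fromCols_mul_fromBlocks, fromCols_mul_fromRows,
    h𝒞, hℬ, h𝒟, hWinv]
  simp only [Matrix.mul_sub, Matrix.sub_mul, Matrix.mul_add, Matrix.add_mul,
    Matrix.mul_neg, Matrix.neg_mul, Matrix.mul_assoc]
  abel
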